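/- Let W be a random variable that equals 0 with probability 1 − c and, with probability c, equals a Binomial(⌈n^{a}⌉, min(1, c·n^{2−d})) random variable, where c ∈ (0,1), a > 0, d > 2 are fixed with a > d − 2. Then for all sufficiently large n, W stochastically dominates the random variable U that is 0 with probability 1 − c/2 and ⌈4/c⌉ with probability c/2. -/

import Mathlib

set_option maxHeartbeats 1000000

open Finset Filter Real Topology

/-- Tail-probability form of stochastic domination: the mixture `W` which is `0` with
probability `1 - c` and `Binomial(⌈n^a⌉, min 1 (c n^{2-d}))` with probability `c`
dominates the variable `U` taking value `⌈4/c⌉` with probability `c/2` and `0` otherwise,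
for all sufficiently large `n`.  (`P(W ≥ k)` for `k ≥ 1` equals `c` times the binomial
upper tail; `P(U ≥ k) = c/2` for `1 ≤ k ≤ ⌈4/c⌉` and `0` beyond.) -/
theorem stmt4 (c a : ℝ) (d : ℕ) (hc0 : 0 < c) (hc1 : c < 1) (ha : 0 < a)
    (hd : 2 < d) (had : (d : ℝ) - 2 < a) :
    ∃ N : ℕ, ∀ n : ℕ, N ≤ n → ∀ k : ℕ, 1 ≤ k →
      (if k ≤ ⌈4 / c⌉₊ then c / 2 else 0) ≤
        c * ∑ j ∈ Finset.Icc k ⌈(n : ℝ) ^ a⌉₊,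
          (Nat.choose ⌈(n : ℝ) ^ a⌉₊ j : ℝ) *
            (min 1 (c * (n : ℝ) ^ ((2 : ℝ) - d))) ^ j *
            (1 - min 1 (c * (n : ℝ) ^ ((2 : ℝ) - d))) ^ (⌈(n : ℝ) ^ a⌉₊ - j) := by
  rw [← Filter.eventually_atTop]
  set K : ℕ := ⌈4 / c⌉₊ with hK
  have hb : (0:ℝ) < a + 2 - d := by linarith
  set u : ℕ → ℝ := fun n => c / 2 * (n : ℝ) ^ (a + 2 - (d:ℝ)) with hu
  -- u tends to infinity
  have tu : Tendsto u atTop atTop := by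
    exact ((tendsto_rpow_atTop hb).comp tendsto_natCast_atTop_atTop).const_mul_atTop
      (by positivity)
  -- the poly-times-exp function tends to 0
  have t0 : Tendsto (fun x : ℝ => (K:ℝ) * (4*x)^K * Real.exp (-x)) atTop (𝓝 0) := by
    have h := (tendsto_pow_mul_exp_neg_atTop_nhds_zero K).const_mul ((K:ℝ) * 4^K)
    rw [mul_zero] at h
    refine h.congr fun x => by ring
  have hhead : ∀ᶠ n : ℕ in atTop, (K:ℝ) * (4 * u n)^K * Real.exp (-(u n)) < 1/2 :=
    tu.eventually ((t0.eventually_lt_const (by norm_num)))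
  have hu1 : ∀ᶠ n : ℕ in atTop, (1:ℝ) ≤ u n := tu.eventually_ge_atTop 1
  -- n^a eventually large
  have tna : Tendsto (fun n : ℕ => (n:ℝ) ^ a) atTop atTop :=
    (tendsto_rpow_atTop ha).comp tendsto_natCast_atTop_atTop
  have hna : ∀ᶠ n : ℕ in atTop, (2*K + 2 : ℝ) ≤ (n:ℝ) ^ a :=
    tna.eventually_ge_atTop _
  filter_upwards [hhead, hu1, hna, eventually_ge_atTop 1] with n hhead hu1 hna hn1
  -- setup
  have hn1' : (1:ℝ) ≤ (n:ℝ) := by exact_mod_cast hn1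
  have hn0 : (0:ℝ) < (n:ℝ) := by linarith
  set M : ℕ := ⌈(n : ℝ) ^ a⌉₊ with hM
  have hple : c * (n : ℝ) ^ ((2 : ℝ) - d) ≤ c := by
    have h1 : (n:ℝ) ^ ((2:ℝ) - d) ≤ 1 :=
      Real.rpow_le_one_of_one_le_of_nonpos hn1' (by
        have h2 : (2:ℝ) < d := by exact_mod_cast hd
        linarith)
    nlinarith
  have hpmin : min 1 (c * (n : ℝ) ^ ((2 : ℝ) - d)) = c * (n : ℝ) ^ ((2 : ℝ) - d) :=
    min_eq_right (by linarith)
  rw [hpmin]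
  set p : ℝ := c * (n : ℝ) ^ ((2 : ℝ) - d) with hp
  have hp0 : 0 < p := by positivity
  have hp1 : p < 1 := lt_of_le_of_lt hple hc1
  -- basic facts about M and u
  have hMge : (n:ℝ)^a ≤ M := Nat.le_ceil _
  have hMle : (M:ℝ) ≤ (n:ℝ)^a + 1 := le_of_lt (Nat.ceil_lt_add_one (by positivity))
  have hnap : (n:ℝ)^a * p = 2 * u n := by
    rw [hp, hu]
    rw [show (n:ℝ)^a * (c * (n:ℝ)^((2:ℝ)-d)) = c * ((n:ℝ)^a * (n:ℝ)^((2:ℝ)-d)) by ring,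
      ← Real.rpow_add hn0]
    ring_nf
  have hKM : 2*K + 2 ≤ M := by
    have : (2*K + 2 : ℝ) ≤ (M:ℝ) := le_trans hna hMge
    exact_mod_cast this
  have hKM' : K ≤ M := by omega
  intro k hk
  split_ifs with hkK
  · -- main case
    have key : (1:ℝ)/2 ≤ ∑ j ∈ Finset.Icc k M,
        (Nat.choose M j : ℝ) * p ^ j * (1-p) ^ (M - j) := by
      set f : ℕ → ℝ := fun j => (Nat.choose M j : ℝ) * p ^ j * (1-p) ^ (M - j) with hf
      have hf0 : ∀ j, 0 ≤ f j := fun j => by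
        have : (0:ℝ) ≤ 1 - p := by linarith
        positivity
      have hsub : ∑ j ∈ Finset.Icc K M, f j ≤ ∑ j ∈ Finset.Icc k M, f j :=
        Finset.sum_le_sum_of_subset_of_nonneg
          (Finset.Icc_subset_Icc_left hkK) (fun j _ _ => hf0 j)
      refine le_trans ?_ hsub
      -- total sum is 1
      have htot : ∑ j ∈ Finset.range (M+1), f j = 1 := by
        have h := add_pow p (1-p) M
        rw [show p + (1-p) = 1 by ring, one_pow] at h
        rw [h]
        exact Finset.sum_congr rfl fun j _ => by simp only [hf]; ring
      have hsplit : ∑ j ∈ Finset.range K, f j + ∑ j ∈ Finset.Ico K (M+1), f j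
          = ∑ j ∈ Finset.range (M+1), f j :=
        Finset.sum_range_add_sum_Ico f (by omega)
      rw [Finset.Ico_add_one_right_eq_Icc] at hsplit
      -- bound the head
      have hhd : ∑ j ∈ Finset.range K, f j ≤ (K:ℝ) * (4 * u n)^K * Real.exp (-(u n)) := by
        have hMp : (M:ℝ) * p ≤ 2 * u n + 1 := by
          nlinarith [hp0.le, hp1.le]
        have h4u : 1 + (M:ℝ)*p ≤ 4 * u n := by linarith
        have hterm : ∀ j ∈ Finset.range K,
            f j ≤ (4 * u n)^K * Real.exp (-(u n)) := by
          intro j hj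
          rw [Finset.mem_range] at hj
          have hch : (Nat.choose M j : ℝ) ≤ (M:ℝ)^j := by
            exact_mod_cast Nat.choose_le_pow M j
          have h1p : (0:ℝ) ≤ 1 - p := by linarith
          have step1 : f j ≤ ((M:ℝ)*p)^j * (1-p)^(M-K) := by
            have e1 : (Nat.choose M j : ℝ) * p ^ j ≤ ((M:ℝ)*p)^j := by
              have hmp : ((M:ℝ)*p)^j = (M:ℝ)^j * p^j := mul_pow _ _ _
              rw [hmp]
              exact mul_le_mul_of_nonneg_right hch (by positivity)
            have e2 : (1-p)^(M-j) ≤ (1-p)^(M-K) :=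
              pow_le_pow_of_le_one h1p (by linarith) (by omega)
            calc f j ≤ ((M:ℝ)*p)^j * (1-p)^(M-j) :=
                  mul_le_mul_of_nonneg_right e1 (by positivity)
              _ ≤ ((M:ℝ)*p)^j * (1-p)^(M-K) :=
                  mul_le_mul_of_nonneg_left e2 (by positivity)
          have step2 : ((M:ℝ)*p)^j ≤ (4 * u n)^K := by
            calc ((M:ℝ)*p)^j ≤ (1 + (M:ℝ)*p)^j := by
                  apply pow_le_pow_left₀ (by positivity) (by linarith)
              _ ≤ (1 + (M:ℝ)*p)^K := by
                  apply pow_le_pow_right₀ (by nlinarith [hp0.le]) (by omega)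
              _ ≤ (4 * u n)^K := by
                  apply pow_le_pow_left₀ (by nlinarith [hp0.le]) h4u
          have step3 : (1-p)^(M-K) ≤ Real.exp (-(u n)) := by
            have e1 : (1-p)^(M-K) ≤ Real.exp (-p) ^ (M-K) :=
              pow_le_pow_left₀ h1p (by linarith [Real.add_one_le_exp (-p)]) _
            rw [← Real.exp_nat_mul] at e1
            refine e1.trans (Real.exp_le_exp.2 ?_)
            have hcast : ((M - K : ℕ):ℝ) = (M:ℝ) - (K:ℝ) := Nat.cast_sub hKM'
            rw [hcast]
            -- need u n ≤ p * (M - K)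
            have hKhalf : (K:ℝ) ≤ (n:ℝ)^a / 2 := by
              have : (2*K + 2 : ℝ) ≤ (n:ℝ)^a := hna
              linarith
            have : u n ≤ p * ((M:ℝ) - K) := by
              have h1 : (n:ℝ)^a / 2 ≤ (M:ℝ) - K := by linarith
              have h2 : p * ((n:ℝ)^a / 2) = u n := by linarith [hnap]
              nlinarith [mul_le_mul_of_nonneg_left h1 hp0.le]
            linarith
          calc f j ≤ ((M:ℝ)*p)^j * (1-p)^(M-K) := step1
            _ ≤ (4 * u n)^K * Real.exp (-(u n)) := by
                have h4 : (0:ℝ) ≤ (4*u n)^K := by positivity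
                have hmp : (0:ℝ) ≤ ((M:ℝ)*p)^j := by positivity
                calc ((M:ℝ)*p)^j * (1-p)^(M-K)
                    ≤ (4 * u n)^K * (1-p)^(M-K) :=
                      mul_le_mul_of_nonneg_right step2 (by positivity)
                  _ ≤ (4 * u n)^K * Real.exp (-(u n)) :=
                      mul_le_mul_of_nonneg_left step3 h4
        calc ∑ j ∈ Finset.range K, f j
            ≤ ∑ _j ∈ Finset.range K, (4 * u n)^K * Real.exp (-(u n)) :=
              Finset.sum_le_sum hterm
          _ = (K:ℝ) * ((4 * u n)^K * Real.exp (-(u n))) := by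
              rw [Finset.sum_const, Finset.card_range, nsmul_eq_mul]
          _ = (K:ℝ) * (4 * u n)^K * Real.exp (-(u n)) := by ring
      have : ∑ j ∈ Finset.Icc K M, f j = 1 - ∑ j ∈ Finset.range K, f j := by
        rw [← htot, ← hsplit]; ring
      rw [this]
      linarith [hhd.trans hhead.le]
    calc c / 2 = c * (1/2) := by ring
      _ ≤ c * ∑ j ∈ Finset.Icc k M,
          (Nat.choose M j : ℝ) * p ^ j * (1-p) ^ (M - j) :=
          mul_le_mul_of_nonneg_left key hc0.le
  · -- trivial nonnegativity
    have h1p : (0:ℝ) ≤ 1 - p := by linarith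
    refine mul_nonneg hc0.le (Finset.sum_nonneg fun j _ => by positivity)
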